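/- arXiv:1812.09918 — 2 statements merged into one kernel-verified Lean document; each statement's English description precedes it below -/
import Mathlib

section
/- Let A → B and A → A' be homomorphisms of commutative rings, M a B-module, and N a natural number. Then there is a canonical isomorphism J^N((M ⊗_A A')/A') ≅ J^N(M/A) ⊗_A A', where on the left M ⊗_A A' is regarded as a module over B ⊗_A A' and its jets are taken relative to A', and on the right the tensor product uses the A-module structure of J^N(M/A) via p₁. -/
/-!
Basic infrastructure for jet algebras and jet modules, following the paper
"Basics of jet modules and algebraic linear differential operators".

For a ring homomorphism `k → A`, the diagonal ideal `I_{A/k} ⊆ A ⊗[k] A` is the kernel of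
the multiplication map; the `N`-th jet algebra is `J^N(A/k) = (A ⊗[k] A) ⧸ I_{A/k}^{N+1}`,
with its two `A`-algebra structure maps `p₁ : a ↦ a ⊗ 1` and `p₂ : a ↦ 1 ⊗ a`.
For an `A`-module `M`, `A ⊗[k] M` is a module over `A ⊗[k] A` via
`(a ⊗ b) • (x ⊗ m) = (a * x) ⊗ (b • m)`, and the `N`-th jet module is
`J^N(M/k) = (A ⊗[k] M) ⧸ I_{A/k}^{N+1} · (A ⊗[k] M)`, a module over `J^N(A/k)`,
equipped with the universal filtered derivation `d^N : M → J^N(M/k)`, `m ↦ [1 ⊗ m]`.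
-/

open scoped TensorProduct

namespace JetPaper

section Bimodule

variable (R B C M P : Type*) [CommRing R]
  [CommRing B] [Algebra R B] [CommRing C] [Algebra R C]
  [AddCommGroup M] [Module R M] [Module B M] [IsScalarTower R B M]
  [AddCommGroup P] [Module R P] [Module C P] [IsScalarTower R C P]

/-- The action of `C` on `M ⊗[R] P` through the right-hand factor, as an algebra
homomorphism into endomorphisms. -/
noncomputable def rightSMulEnd : C →ₐ[R] Module.End R (M ⊗[R] P) where
  toFun c := LinearMap.lTensor M (Algebra.lsmul R R P c)
  map_one' := LinearMap.ext fun x => by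
    induction x using TensorProduct.induction_on with
    | zero => simp
    | tmul m p => simp
    | add u v hu hv => simp only [map_add, hu, hv]
  map_mul' c c' := LinearMap.ext fun x => by
    induction x using TensorProduct.induction_on with
    | zero => simp
    | tmul m p => simp [mul_smul, Module.End.mul_apply]
    | add u v hu hv => simp only [map_add, Module.End.mul_apply] at hu hv ⊢; rw [hu, hv]
  map_zero' := LinearMap.ext fun x => by
    induction x using TensorProduct.induction_on with
    | zero => simp
    | tmul m p => simp
    | add u v hu hv => simp only [map_add, hu, hv]
  map_add' c c' := LinearMap.ext fun x => by
    induction x using TensorProduct.induction_on with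
    | zero => simp
    | tmul m p => simp [add_smul, TensorProduct.tmul_add]
    | add u v hu hv =>
        simp only [map_add, LinearMap.add_apply] at hu hv ⊢
        rw [hu, hv]
  commutes' r := LinearMap.ext fun x => by
    induction x using TensorProduct.induction_on with
    | zero => simp
    | tmul m p =>
        simp only [LinearMap.lTensor_tmul, Algebra.lsmul_coe,
          Module.algebraMap_end_apply, algebraMap_smul]
        rw [TensorProduct.tmul_smul]
    | add u v hu hv => simp only [map_add, hu, hv]

@[simp] lemma rightSMulEnd_tmul (c : C) (m : M) (p : P) :
    rightSMulEnd R C M P c (m ⊗ₜ[R] p) = m ⊗ₜ[R] (c • p) := by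
  simp [rightSMulEnd]

/-- The algebra homomorphism `B ⊗[R] C → End (M ⊗[R] P)` realizing the natural
bimodule structure `(b ⊗ c) • (m ⊗ p) = (b • m) ⊗ (c • p)`. -/
noncomputable def bimodMap : (B ⊗[R] C) →ₐ[R] Module.End R (M ⊗[R] P) :=
  Algebra.TensorProduct.lift (Algebra.lsmul R R (M ⊗[R] P)) (rightSMulEnd R C M P)
    (fun b c => show Commute _ _ from LinearMap.ext fun x => by
      induction x using TensorProduct.induction_on with
      | zero => simp [Module.End.mul_apply]
      | tmul m p => simp [Module.End.mul_apply, TensorProduct.smul_tmul']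
      | add u v hu hv =>
          simp only [Module.End.mul_apply] at hu hv ⊢
          simp only [map_add, hu, hv])

/-- The `B ⊗[R] C`-module structure on `M ⊗[R] P`, where `B` acts through the left factor
and `C` through the right one. -/
noncomputable def bimodule : Module (B ⊗[R] C) (M ⊗[R] P) :=
  Module.compHom _ (bimodMap R B C M P).toRingHom

/-- The action of `C` on `M ⊗[R] P` through the right-hand factor, as a module structure. -/
noncomputable def rightTensorModule : Module C (M ⊗[R] P) :=
  Module.compHom _ (rightSMulEnd R C M P).toRingHom

end Bimodule

section BiTensorDef

/-- Type synonym for `M ⊗[R] P`, regarded as a module over `B ⊗[R] C`, where `B` acts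
through the left factor and `C` through the right factor. -/
@[nolint unusedArguments]
def BiTensor (R B C M P : Type*) [CommRing R]
    [CommRing B] [Algebra R B] [CommRing C] [Algebra R C]
    [AddCommGroup M] [Module R M] [Module B M] [IsScalarTower R B M]
    [AddCommGroup P] [Module R P] [Module C P] [IsScalarTower R C P] : Type _ :=
  M ⊗[R] P

variable (R B C M P : Type*) [CommRing R]
  [CommRing B] [Algebra R B] [CommRing C] [Algebra R C]
  [AddCommGroup M] [Module R M] [Module B M] [IsScalarTower R B M]
  [AddCommGroup P] [Module R P] [Module C P] [IsScalarTower R C P]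

/-- The canonical (identity) map `M ⊗[R] P → BiTensor R B C M P`. -/
def BiTensor.of : M ⊗[R] P → BiTensor R B C M P := id

noncomputable instance : AddCommGroup (BiTensor R B C M P) :=
  inferInstanceAs (AddCommGroup (M ⊗[R] P))

noncomputable instance : Module R (BiTensor R B C M P) :=
  inferInstanceAs (Module R (M ⊗[R] P))

noncomputable instance : Module (B ⊗[R] C) (BiTensor R B C M P) := bimodule R B C M P

noncomputable instance : Module C (BiTensor R B C M P) := rightTensorModule R C M P

lemma BiTensor.smul_of (b : B) (c : C) (m : M) (p : P) :
    (b ⊗ₜ[R] c : B ⊗[R] C) • BiTensor.of R B C M P (m ⊗ₜ[R] p) =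
      BiTensor.of R B C M P ((b • m) ⊗ₜ[R] (c • p)) := by
  show bimodMap R B C M P (b ⊗ₜ[R] c) (m ⊗ₜ[R] p) = _
  simp only [bimodMap, Algebra.TensorProduct.lift_tmul]
  simp only [Module.End.mul_apply, TensorProduct.smul_tmul', rightSMulEnd_tmul,
    Algebra.lsmul_coe]
  rfl

lemma BiTensor.rsmul_of (c : C) (m : M) (p : P) :
    c • BiTensor.of R B C M P (m ⊗ₜ[R] p) = BiTensor.of R B C M P (m ⊗ₜ[R] (c • p)) := by
  show rightSMulEnd R C M P c (m ⊗ₜ[R] p) = _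
  simp only [rightSMulEnd_tmul]
  rfl

attribute [local instance] Algebra.TensorProduct.rightAlgebra in
instance : IsScalarTower C (B ⊗[R] C) (BiTensor R B C M P) := by
  refine IsScalarTower.of_algebraMap_smul
    (R := C) (A := B ⊗[R] C) (M := BiTensor R B C M P) fun c x => ?_
  have halg : algebraMap C (B ⊗[R] C) c = (1 : B) ⊗ₜ[R] c := rfl
  have key : ∀ y : M ⊗[R] P,
      ((1 : B) ⊗ₜ[R] c : B ⊗[R] C) • BiTensor.of R B C M P y =
        c • BiTensor.of R B C M P y := by
    intro y
    induction y using TensorProduct.induction_on with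
    | zero =>
        show ((1 : B) ⊗ₜ[R] c : B ⊗[R] C) • (0 : BiTensor R B C M P) =
          c • (0 : BiTensor R B C M P)
        rw [smul_zero, smul_zero]
    | tmul m p => rw [BiTensor.smul_of, one_smul, BiTensor.rsmul_of]
    | add u v hu hv =>
        have hadd : ∀ u v : M ⊗[R] P, BiTensor.of R B C M P (u + v) =
            BiTensor.of R B C M P u + BiTensor.of R B C M P v := fun _ _ => rfl
        rw [hadd, smul_add, smul_add, hu, hv]
  rw [halg]
  exact key x

end BiTensorDef

section JetDef

variable (k A : Type*) [CommRing k] [CommRing A] [Algebra k A]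

/-- The diagonal ideal `I_{A/k} ⊆ A ⊗[k] A`: the kernel of the multiplication map. -/
noncomputable abbrev diagIdeal : Ideal (A ⊗[k] A) := KaehlerDifferential.ideal k A

/-- The `N`-th jet algebra `J^N(A/k) = (A ⊗[k] A) ⧸ I_{A/k}^{N+1}`. -/
noncomputable abbrev JetAlg (N : ℕ) : Type _ :=
  (A ⊗[k] A) ⧸ (diagIdeal k A ^ (N + 1))

/-- The first `A`-algebra structure map `p₁ : A → J^N(A/k)`, `a ↦ a ⊗ 1`. -/
noncomputable def jetP1 (N : ℕ) : A →+* JetAlg k A N :=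
  (Ideal.Quotient.mk _).comp Algebra.TensorProduct.includeLeftRingHom

/-- The second `A`-algebra structure map `p₂ : A → J^N(A/k)`, `a ↦ 1 ⊗ a`. -/
noncomputable def jetP2 (N : ℕ) : A →+* JetAlg k A N :=
  (Ideal.Quotient.mk _).comp (Algebra.TensorProduct.includeRight : A →ₐ[k] A ⊗[k] A).toRingHom

variable (M : Type*) [AddCommGroup M] [Module k M] [Module A M] [IsScalarTower k A M]

/-- `A ⊗[k] M` is a module over `A ⊗[k] A` via `(a ⊗ b) • (x ⊗ m) = (a * x) ⊗ (b • m)`. -/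
noncomputable instance jetTensorModule : Module (A ⊗[k] A) (A ⊗[k] M) :=
  bimodule k A A A M

@[simp] lemma jet_smul_tmul (a b x : A) (m : M) :
    (a ⊗ₜ[k] b : A ⊗[k] A) • (x ⊗ₜ[k] m : A ⊗[k] M) = (a * x) ⊗ₜ[k] (b • m) := by
  show bimodMap k A A A M (a ⊗ₜ[k] b) (x ⊗ₜ[k] m) = _
  simp only [bimodMap, Algebra.TensorProduct.lift_tmul]
  simp [Module.End.mul_apply, TensorProduct.smul_tmul', smul_eq_mul]

instance jetTower1 : IsScalarTower A (A ⊗[k] A) (A ⊗[k] M) :=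
  IsScalarTower.of_algebraMap_smul fun a x => by
    have halg : algebraMap A (A ⊗[k] A) a = a ⊗ₜ[k] (1 : A) := rfl
    rw [halg]
    induction x using TensorProduct.induction_on with
    | zero => simp
    | tmul y m => rw [jet_smul_tmul, TensorProduct.smul_tmul']; simp
    | add u v hu hv => rw [smul_add, hu, hv, smul_add]

instance jetTower0 : IsScalarTower k (A ⊗[k] A) (A ⊗[k] M) :=
  IsScalarTower.of_algebraMap_smul fun r x => by
    rw [IsScalarTower.algebraMap_apply k A (A ⊗[k] A), algebraMap_smul, algebraMap_smul]

/-- The `N`-th jet module `J^N(M/k) = (A ⊗[k] M) ⧸ I_{A/k}^{N+1}·(A ⊗[k] M)`;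
it is a module over `J^N(A/k)`. -/
noncomputable abbrev JetMod (N : ℕ) : Type _ :=
  (A ⊗[k] M) ⧸ ((diagIdeal k A ^ (N + 1)) • (⊤ : Submodule (A ⊗[k] A) (A ⊗[k] M)))

/-- The universal (filtered) derivation `d^N_{M/k} : M → J^N(M/k)`, `m ↦ [1 ⊗ m]`. -/
noncomputable def jetD (N : ℕ) : M → JetMod k A M N :=
  fun m => Submodule.Quotient.mk ((1 : A) ⊗ₜ[k] m)

instance jetModTower (N : ℕ) : IsScalarTower k A (JetMod k A M N) :=
  IsScalarTower.of_algebraMap_smul fun r x => by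
    obtain ⟨y, rfl⟩ := Submodule.Quotient.mk_surjective _ x
    rw [← Submodule.Quotient.mk_smul, ← Submodule.Quotient.mk_smul, algebraMap_smul]

instance jetQuotTower (N : ℕ) : IsScalarTower A (JetAlg k A N) (JetMod k A M N) := by
  refine IsScalarTower.of_algebraMap_smul
    (R := A) (A := JetAlg k A N) (M := JetMod k A M N) fun a x => ?_
  obtain ⟨y, rfl⟩ := Submodule.Quotient.mk_surjective _ x
  have h1 : algebraMap A (JetAlg k A N) a • (Submodule.Quotient.mk y : JetMod k A M N) =
      Submodule.Quotient.mk ((algebraMap A (A ⊗[k] A) a) • y) := rfl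
  rw [h1, algebraMap_smul (A ⊗[k] A) a y, Submodule.Quotient.mk_smul]

end JetDef

end JetPaper


namespace JetPaper

attribute [local instance] Algebra.TensorProduct.rightAlgebra

section BCAux
set_option linter.unusedSectionVars false
variable (A B A' : Type*) [CommRing A] [CommRing B] [CommRing A']
  [Algebra A B] [Algebra A A']
  (M : Type*) [AddCommGroup M] [Module A M] [Module B M] [IsScalarTower A B M]

/-- raw forward map `(b ⊗ x) ⊗ (m ⊗ y) ↦ (b ⊗ m) ⊗ (x*y)`. -/
noncomputable def bcF : ((B ⊗[A] A') ⊗[A] (M ⊗[A] A')) →ₗ[A] (B ⊗[A] M) ⊗[A] A' :=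
  (LinearMap.lTensor (B ⊗[A] M) (LinearMap.mul' A A')).comp
    (TensorProduct.tensorTensorTensorComm A B A' M A').toLinearMap

@[simp] lemma bcF_tmul (b : B) (x : A') (m : M) (y : A') :
    bcF A B A' M ((b ⊗ₜ[A] x) ⊗ₜ[A] (m ⊗ₜ[A] y)) = (b ⊗ₜ[A] m) ⊗ₜ[A] (x * y) := by
  simp [bcF]

lemma bc_asmul (a : A) (u : B ⊗[A] A') : a • u = (algebraMap A A' a) • u := by
  induction u using TensorProduct.induction_on with
  | zero => simp
  | tmul b z =>
      have h : (algebraMap A A' a) • (b ⊗ₜ[A] z) = (1 ⊗ₜ[A] algebraMap A A' a) * (b ⊗ₜ[A] z) := rfl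
      rw [h, Algebra.TensorProduct.tmul_mul_tmul, one_mul, TensorProduct.smul_tmul',
        TensorProduct.smul_tmul, Algebra.smul_def]
  | add u v hu hv => rw [smul_add, smul_add, hu, hv]

lemma bcF_rsmul (x : A') (b' : B ⊗[A] A') (t : M ⊗[A] A') :
    bcF A B A' M (b' ⊗ₜ[A] (LinearMap.lTensor M (Algebra.lsmul A A A' x) t)) =
      LinearMap.lTensor (B ⊗[A] M) (Algebra.lsmul A A A' x) (bcF A B A' M (b' ⊗ₜ[A] t)) := by
  induction t using TensorProduct.induction_on with
  | zero => simp
  | tmul m y =>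
      induction b' using TensorProduct.induction_on with
      | zero => simp
      | tmul b z =>
          simp only [LinearMap.lTensor_tmul, Algebra.lsmul_coe, bcF_tmul, smul_eq_mul]
          ring_nf
      | add u v hu hv =>
          rw [TensorProduct.add_tmul, TensorProduct.add_tmul, map_add, map_add, hu, hv, map_add]
  | add u v hu hv =>
      rw [map_add, TensorProduct.tmul_add, TensorProduct.tmul_add, map_add, map_add, hu, hv]
      exact (map_add _ _ _).symm

lemma bc_rightAlg_smul (x : A') (b : B) (z : A') :
    x • (b ⊗ₜ[A] z : B ⊗[A] A') = b ⊗ₜ[A] (x * z) := by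
  have h : x • (b ⊗ₜ[A] z : B ⊗[A] A') = (1 ⊗ₜ[A] x) * (b ⊗ₜ[A] z) := rfl
  rw [h, Algebra.TensorProduct.tmul_mul_tmul, one_mul]

lemma bcF_lsmul (x : A') (b' : B ⊗[A] A') (t : M ⊗[A] A') :
    bcF A B A' M ((x • b') ⊗ₜ[A] t) =
      LinearMap.lTensor (B ⊗[A] M) (Algebra.lsmul A A A' x) (bcF A B A' M (b' ⊗ₜ[A] t)) := by
  induction b' using TensorProduct.induction_on with
  | zero => simp
  | tmul b z =>
      rw [bc_rightAlg_smul]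
      induction t using TensorProduct.induction_on with
      | zero => simp
      | tmul m y =>
          simp only [bcF_tmul, LinearMap.lTensor_tmul, Algebra.lsmul_coe, smul_eq_mul]
          ring_nf
      | add u v hu hv =>
          rw [TensorProduct.tmul_add, TensorProduct.tmul_add, map_add, map_add, hu, hv, map_add]
  | add u v hu hv =>
      rw [smul_add, TensorProduct.add_tmul, TensorProduct.add_tmul, map_add, map_add, hu, hv,
        map_add]

/-- The forward map on one tensor factor. -/
noncomputable def bcf1 (b' : B ⊗[A] A') :
    BiTensor A B A' M A' →ₗ[A'] BiTensor A B A' (B ⊗[A] M) A' where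
  toFun t := BiTensor.of A B A' (B ⊗[A] M) A' (bcF A B A' M (b' ⊗ₜ[A] t))
  map_add' t t' := by
    show BiTensor.of A B A' (B ⊗[A] M) A' (bcF A B A' M (b' ⊗ₜ[A] (t + t'))) = _
    exact congrArg (BiTensor.of A B A' (B ⊗[A] M) A')
      ((congrArg (bcF A B A' M) (TensorProduct.tmul_add b' (t : M ⊗[A] A') t')).trans
        (map_add _ _ _))
  map_smul' x t := by
    exact congrArg (BiTensor.of A B A' (B ⊗[A] M) A') (bcF_rsmul A B A' M x b' t)

noncomputable def bcL : (B ⊗[A] A') →ₗ[A']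
    (BiTensor A B A' M A' →ₗ[A'] BiTensor A B A' (B ⊗[A] M) A') where
  toFun := bcf1 A B A' M
  map_add' u v := LinearMap.ext fun t => by
    show BiTensor.of A B A' (B ⊗[A] M) A' (bcF A B A' M ((u + v) ⊗ₜ[A] t)) = _
    exact congrArg (BiTensor.of A B A' (B ⊗[A] M) A')
      ((congrArg (bcF A B A' M) (TensorProduct.add_tmul u v (t : M ⊗[A] A'))).trans
        (map_add _ _ _))
  map_smul' x b' := LinearMap.ext fun t => by
    exact congrArg (BiTensor.of A B A' (B ⊗[A] M) A') (bcF_lsmul A B A' M x b' t)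

/-- The forward map before quotienting. -/
noncomputable def bcf0 : ((B ⊗[A] A') ⊗[A'] BiTensor A B A' M A') →ₗ[A']
    BiTensor A B A' (B ⊗[A] M) A' :=
  TensorProduct.lift (bcL A B A' M)

@[simp] lemma bcf0_tmul (b' : B ⊗[A] A') (t : M ⊗[A] A') :
    bcf0 A B A' M (b' ⊗ₜ[A'] (BiTensor.of A B A' M A' t)) =
      BiTensor.of A B A' (B ⊗[A] M) A' (bcF A B A' M (b' ⊗ₜ[A] t)) := rfl

end BCAux

section BCAux2
set_option linter.unusedSectionVars false
variable (A B A' : Type*) [CommRing A] [CommRing B] [CommRing A']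
  [Algebra A B] [Algebra A A']
  (M : Type*) [AddCommGroup M] [Module A M] [Module B M] [IsScalarTower A B M]

/-- innermost piece of the backward map : `z ↦ (b ⊗ 1) ⊗ (m ⊗ z)`. -/
noncomputable def bcg3 (b : B) (m : M) :
    A' →ₗ[A] ((B ⊗[A] A') ⊗[A'] BiTensor A B A' M A') where
  toFun z := (b ⊗ₜ[A] (1 : A')) ⊗ₜ[A'] (BiTensor.of A B A' M A' (m ⊗ₜ[A] z))
  map_add' z z' := by
    have : BiTensor.of A B A' M A' (m ⊗ₜ[A] (z + z')) =
        BiTensor.of A B A' M A' (m ⊗ₜ[A] z) + BiTensor.of A B A' M A' (m ⊗ₜ[A] z') := by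
      show m ⊗ₜ[A] (z + z') = m ⊗ₜ[A] z + m ⊗ₜ[A] z'
      rw [TensorProduct.tmul_add]
    rw [this, TensorProduct.tmul_add]
  map_smul' a z := by
    have h1 : BiTensor.of A B A' M A' (m ⊗ₜ[A] (a • z)) =
        (algebraMap A A' a) • BiTensor.of A B A' M A' (m ⊗ₜ[A] z) := by
      rw [BiTensor.rsmul_of, Algebra.smul_def, smul_eq_mul]
    rw [h1, TensorProduct.tmul_smul, TensorProduct.smul_tmul', ← bc_asmul,
      ← TensorProduct.smul_tmul']
    rfl

noncomputable def bcg2 : (B ⊗[A] M) →ₗ[A]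
    (A' →ₗ[A] ((B ⊗[A] A') ⊗[A'] BiTensor A B A' M A')) :=
  TensorProduct.lift <| LinearMap.mk₂ A (fun b m => bcg3 A B A' M b m)
    (fun b b' m => LinearMap.ext fun z => by
      show ((b + b') ⊗ₜ[A] (1:A')) ⊗ₜ[A'] _ = _
      rw [TensorProduct.add_tmul, TensorProduct.add_tmul]; rfl)
    (fun a b m => LinearMap.ext fun z => by
      show ((a • b) ⊗ₜ[A] (1:A')) ⊗ₜ[A'] (BiTensor.of A B A' M A' (m ⊗ₜ[A] z)) =
        a • (((b ⊗ₜ[A] (1:A')) ⊗ₜ[A'] (BiTensor.of A B A' M A' (m ⊗ₜ[A] z))))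
      conv_rhs => rw [TensorProduct.smul_tmul', TensorProduct.smul_tmul'])
    (fun b m m' => LinearMap.ext fun z => by
      show (b ⊗ₜ[A] (1:A')) ⊗ₜ[A'] (BiTensor.of A B A' M A' ((m + m') ⊗ₜ[A] z)) = _
      have : BiTensor.of A B A' M A' ((m + m') ⊗ₜ[A] z) =
          BiTensor.of A B A' M A' (m ⊗ₜ[A] z) + BiTensor.of A B A' M A' (m' ⊗ₜ[A] z) := by
        show (m + m') ⊗ₜ[A] z = m ⊗ₜ[A] z + m' ⊗ₜ[A] z
        rw [TensorProduct.add_tmul]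
      rw [this, TensorProduct.tmul_add]; rfl)
    (fun a b m => LinearMap.ext fun z => by
      show (b ⊗ₜ[A] (1:A')) ⊗ₜ[A'] (BiTensor.of A B A' M A' ((a • m) ⊗ₜ[A] z)) = _
      have : BiTensor.of A B A' M A' ((a • m) ⊗ₜ[A] z) =
          BiTensor.of A B A' M A' (m ⊗ₜ[A] (a • z)) := by
        show (a • m) ⊗ₜ[A] z = m ⊗ₜ[A] (a • z)
        rw [TensorProduct.smul_tmul]
      rw [this, LinearMap.smul_apply, ← map_smul]
      rfl)

/-- raw backward map `(b ⊗ m) ⊗ z ↦ (b ⊗ 1) ⊗ (m ⊗ z)`. -/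
noncomputable def bcG : ((B ⊗[A] M) ⊗[A] A') →ₗ[A]
    ((B ⊗[A] A') ⊗[A'] BiTensor A B A' M A') :=
  TensorProduct.lift (bcg2 A B A' M)

@[simp] lemma bcG_tmul (b : B) (m : M) (z : A') :
    bcG A B A' M ((b ⊗ₜ[A] m) ⊗ₜ[A] z) =
      (b ⊗ₜ[A] (1 : A')) ⊗ₜ[A'] (BiTensor.of A B A' M A' (m ⊗ₜ[A] z)) := rfl

lemma bcG_rsmul (x : A') (ξ : (B ⊗[A] M) ⊗[A] A') :
    bcG A B A' M (LinearMap.lTensor (B ⊗[A] M) (Algebra.lsmul A A A' x) ξ) =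
      x • bcG A B A' M ξ := by
  induction ξ using TensorProduct.induction_on with
  | zero => simp
  | tmul p z =>
      induction p using TensorProduct.induction_on with
      | zero => simp
      | tmul b m =>
          simp only [LinearMap.lTensor_tmul, Algebra.lsmul_coe, smul_eq_mul, bcG_tmul]
          conv_rhs => rw [← TensorProduct.tmul_smul, BiTensor.rsmul_of, smul_eq_mul]
      | add u v hu hv =>
          simp only [TensorProduct.add_tmul, map_add, smul_add, hu, hv]
  | add u v hu hv => simp only [map_add, smul_add, hu, hv]

/-- The backward map before quotienting. -/
noncomputable def bcg0 : BiTensor A B A' (B ⊗[A] M) A' →ₗ[A']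
    ((B ⊗[A] A') ⊗[A'] BiTensor A B A' M A') where
  toFun ξ := bcG A B A' M ξ
  map_add' ξ ξ' := map_add _ _ _
  map_smul' x ξ := bcG_rsmul A B A' M x ξ

lemma bc_fg (ξ : (B ⊗[A] M) ⊗[A] A') :
    bcf0 A B A' M (bcG A B A' M ξ) = BiTensor.of A B A' (B ⊗[A] M) A' ξ := by
  induction ξ using TensorProduct.induction_on with
  | zero => simp only [map_zero]; rfl
  | tmul p z =>
      induction p using TensorProduct.induction_on with
      | zero =>
          rw [TensorProduct.zero_tmul, map_zero, map_zero]; rfl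
      | tmul b m =>
          rw [bcG_tmul, bcf0_tmul, bcF_tmul, one_mul]
      | add u v hu hv =>
          rw [TensorProduct.add_tmul, map_add, map_add, hu, hv]; rfl
  | add u v hu hv => rw [map_add, map_add, hu, hv]; rfl

lemma bc_gf (w : (B ⊗[A] A') ⊗[A'] BiTensor A B A' M A') :
    bcG A B A' M (bcf0 A B A' M w) = w := by
  induction w using TensorProduct.induction_on with
  | zero => rw [map_zero]; exact map_zero (bcG A B A' M)
  | tmul b' t =>
      have key : ∀ traw : M ⊗[A] A',
          bcG A B A' M (bcf0 A B A' M (b' ⊗ₜ[A'] (BiTensor.of A B A' M A' traw))) =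
            b' ⊗ₜ[A'] (BiTensor.of A B A' M A' traw) := by
        intro traw
        induction traw using TensorProduct.induction_on with
        | zero =>
            have h0 : (BiTensor.of A B A' M A' (0 : M ⊗[A] A')) =
                (0 : BiTensor A B A' M A') := rfl
            rw [h0, TensorProduct.tmul_zero, map_zero]; exact map_zero (bcG A B A' M)
        | tmul m y =>
            induction b' using TensorProduct.induction_on with
            | zero => rw [TensorProduct.zero_tmul, map_zero]; exact map_zero (bcG A B A' M)
            | tmul b z =>
                rw [bcf0_tmul, bcF_tmul]
                show bcG A B A' M ((b ⊗ₜ[A] m) ⊗ₜ[A] (z * y)) = _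
                rw [bcG_tmul]
                have h1 : (b ⊗ₜ[A] z : B ⊗[A] A') = z • (b ⊗ₜ[A] (1:A')) := by
                  rw [bc_rightAlg_smul, mul_one]
                rw [h1, TensorProduct.smul_tmul, BiTensor.rsmul_of, smul_eq_mul]
            | add u v hu hv =>
                rw [TensorProduct.add_tmul, map_add]
                exact (map_add (bcG A B A' M) (bcf0 A B A' M (u ⊗ₜ[A'] _))
                  (bcf0 A B A' M (v ⊗ₜ[A'] _))).trans (congrArg₂ (· + ·) hu hv)
        | add u v hu hv =>
            have h0 : (BiTensor.of A B A' M A' (u + v)) =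
                BiTensor.of A B A' M A' u + BiTensor.of A B A' M A' v := rfl
            rw [h0, TensorProduct.tmul_add, map_add]
            exact (map_add (bcG A B A' M) (bcf0 A B A' M (b' ⊗ₜ[A'] BiTensor.of A B A' M A' u))
              (bcf0 A B A' M (b' ⊗ₜ[A'] BiTensor.of A B A' M A' v))).trans
              (congrArg₂ (· + ·) hu hv)
      exact key t
  | add u v hu hv =>
    rw [map_add]
    exact (map_add (bcG A B A' M) (bcf0 A B A' M u) (bcf0 A B A' M v)).trans
      (congrArg₂ (· + ·) hu hv)

/-- The pre-quotient equivalence. -/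
noncomputable def bce0 : ((B ⊗[A] A') ⊗[A'] BiTensor A B A' M A') ≃ₗ[A']
    BiTensor A B A' (B ⊗[A] M) A' :=
  LinearEquiv.ofLinear (bcf0 A B A' M) (bcg0 A B A' M)
    (LinearMap.ext fun ξ => bc_fg A B A' M ξ)
    (LinearMap.ext fun w => bc_gf A B A' M w)

end BCAux2

section BCAux3
set_option linter.unusedSectionVars false
variable (A B A' : Type*) [CommRing A] [CommRing B] [CommRing A']
  [Algebra A B] [Algebra A A']

noncomputable def bcIotaLin : (B ⊗[A] B) →ₗ[A] ((B ⊗[A] A') ⊗[A'] (B ⊗[A] A')) :=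
  TensorProduct.lift <| LinearMap.mk₂ A
    (fun b c => (b ⊗ₜ[A] (1 : A')) ⊗ₜ[A'] (c ⊗ₜ[A] (1 : A')))
    (fun b b' c => by
      rw [TensorProduct.add_tmul, TensorProduct.add_tmul])
    (fun a b c => by
      conv_rhs => rw [TensorProduct.smul_tmul', TensorProduct.smul_tmul'])
    (fun b c c' => by
      rw [TensorProduct.add_tmul, TensorProduct.tmul_add])
    (fun a b c => by
      rw [show ((a • c) ⊗ₜ[A] (1:A') : B ⊗[A] A') = a • (c ⊗ₜ[A] (1:A')) from
        (TensorProduct.smul_tmul' a c 1).symm, bc_asmul, TensorProduct.tmul_smul]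
      conv_rhs => rw [TensorProduct.smul_tmul', bc_asmul, ← TensorProduct.smul_tmul'])

@[simp] lemma bcIotaLin_tmul (b c : B) :
    bcIotaLin A B A' (b ⊗ₜ[A] c) = (b ⊗ₜ[A] (1 : A')) ⊗ₜ[A'] (c ⊗ₜ[A] (1 : A')) := rfl

set_option maxHeartbeats 1000000 in
lemma bcIotaLin_mul (r s : B ⊗[A] B) :
    bcIotaLin A B A' (r * s) = bcIotaLin A B A' r * bcIotaLin A B A' s := by
  induction r using TensorProduct.induction_on with
  | zero => simp
  | tmul b c =>
      induction s using TensorProduct.induction_on with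
      | zero => simp
      | tmul d e =>
          rw [Algebra.TensorProduct.tmul_mul_tmul, bcIotaLin_tmul, bcIotaLin_tmul,
            bcIotaLin_tmul, Algebra.TensorProduct.tmul_mul_tmul,
            Algebra.TensorProduct.tmul_mul_tmul, Algebra.TensorProduct.tmul_mul_tmul, one_mul]
      | add u v hu hv => rw [mul_add, map_add, map_add, mul_add, hu, hv]
  | add u v hu hv => rw [add_mul, map_add, map_add, add_mul, hu, hv]

/-- The canonical ring map `B ⊗[A] B → B' ⊗[A'] B'` for `B' = B ⊗[A] A'`. -/
noncomputable def bcIota : (B ⊗[A] B) →+* ((B ⊗[A] A') ⊗[A'] (B ⊗[A] A')) where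
  toFun := bcIotaLin A B A'
  map_one' := by
    rw [Algebra.TensorProduct.one_def, bcIotaLin_tmul, ← Algebra.TensorProduct.one_def]
    rfl
  map_mul' := bcIotaLin_mul A B A'
  map_zero' := map_zero _
  map_add' := map_add _

lemma bc_lmul_iota (r : B ⊗[A] B) :
    Algebra.TensorProduct.lmul' A' (S := B ⊗[A] A') (bcIota A B A' r) =
      (Algebra.TensorProduct.lmul' A (S := B) r) ⊗ₜ[A] (1 : A') := by
  induction r using TensorProduct.induction_on with
  | zero => simp
  | tmul b c =>
      show Algebra.TensorProduct.lmul' A' (S := B ⊗[A] A') ((b ⊗ₜ[A] (1:A')) ⊗ₜ[A'] (c ⊗ₜ[A] (1:A'))) = _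
      rw [Algebra.TensorProduct.lmul'_apply_tmul, Algebra.TensorProduct.lmul'_apply_tmul,
        Algebra.TensorProduct.tmul_mul_tmul, one_mul]
  | add u v hu hv =>
      rw [map_add, map_add, map_add, hu, hv, TensorProduct.add_tmul]

lemma bc_iota_mem_ideal {r : B ⊗[A] B} (hr : r ∈ KaehlerDifferential.ideal A B) :
    bcIota A B A' r ∈ KaehlerDifferential.ideal A' (B ⊗[A] A') := by
  rw [RingHom.mem_ker] at hr ⊢
  rw [show (Algebra.TensorProduct.lmul' A' (S := B ⊗[A] A')) (bcIota A B A' r) =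
    Algebra.TensorProduct.lmul' A' (S := B ⊗[A] A') (bcIota A B A' r) from rfl, bc_lmul_iota, hr,
    TensorProduct.zero_tmul]

lemma bc_map_ideal_le :
    Ideal.map (bcIota A B A') (KaehlerDifferential.ideal A B) ≤
      KaehlerDifferential.ideal A' (B ⊗[A] A') := by
  rw [Ideal.map_le_iff_le_comap]
  intro r hr
  exact bc_iota_mem_ideal A B A' hr

lemma bc_ideal_le_map :
    KaehlerDifferential.ideal A' (B ⊗[A] A') ≤
      Ideal.map (bcIota A B A') (KaehlerDifferential.ideal A B) := by
  rw [← KaehlerDifferential.span_range_eq_ideal, Ideal.span_le]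
  rintro _ ⟨b', rfl⟩
  dsimp only
  induction b' using TensorProduct.induction_on with
  | zero => simp
  | tmul b x =>
      have key : (1 : B ⊗[A] A') ⊗ₜ[A'] (b ⊗ₜ[A] x) - (b ⊗ₜ[A] x) ⊗ₜ[A'] (1 : B ⊗[A] A') =
          x • ((1 : B ⊗[A] A') ⊗ₜ[A'] (b ⊗ₜ[A] (1:A')) -
            (b ⊗ₜ[A] (1:A')) ⊗ₜ[A'] (1 : B ⊗[A] A')) := by
        rw [smul_sub, ← TensorProduct.tmul_smul, bc_rightAlg_smul, mul_one,
          TensorProduct.smul_tmul', bc_rightAlg_smul, mul_one]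
      rw [key]
      have hsd : ∀ D : (B ⊗[A] A') ⊗[A'] (B ⊗[A] A'),
          x • D = algebraMap A' ((B ⊗[A] A') ⊗[A'] (B ⊗[A] A')) x * D := fun D =>
        Algebra.smul_def x D
      rw [hsd]
      refine Ideal.mul_mem_left _ _ ?_
      have h1 : (1 : B ⊗[A] A') ⊗ₜ[A'] (b ⊗ₜ[A] (1:A')) -
          (b ⊗ₜ[A] (1:A')) ⊗ₜ[A'] (1 : B ⊗[A] A') =
          bcIota A B A' ((1 : B) ⊗ₜ[A] b - b ⊗ₜ[A] (1 : B)) := by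
        rw [map_sub]
        show _ = (1 ⊗ₜ[A] (1:A')) ⊗ₜ[A'] (b ⊗ₜ[A] (1:A')) -
          (b ⊗ₜ[A] (1:A')) ⊗ₜ[A'] (1 ⊗ₜ[A] (1:A'))
        rw [← Algebra.TensorProduct.one_def]
      rw [h1]
      exact Ideal.mem_map_of_mem _ (KaehlerDifferential.one_smul_sub_smul_one_mem_ideal A b)
  | add u v hu hv =>
      have key : (1 : B ⊗[A] A') ⊗ₜ[A'] (u + v) - (u + v) ⊗ₜ[A'] (1 : B ⊗[A] A') =
          ((1 : B ⊗[A] A') ⊗ₜ[A'] u - u ⊗ₜ[A'] (1 : B ⊗[A] A')) +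
          ((1 : B ⊗[A] A') ⊗ₜ[A'] v - v ⊗ₜ[A'] (1 : B ⊗[A] A')) := by
        rw [TensorProduct.tmul_add, TensorProduct.add_tmul]; ring
      rw [key]
      exact add_mem hu hv

lemma bc_pow_ideal_le_map (N : ℕ) :
    (KaehlerDifferential.ideal A' (B ⊗[A] A')) ^ (N + 1) ≤
      Ideal.map (bcIota A B A') ((KaehlerDifferential.ideal A B) ^ (N + 1)) := by
  rw [Ideal.map_pow]
  exact Ideal.pow_right_mono (bc_ideal_le_map A B A') _

lemma bc_map_pow_le (N : ℕ) :
    Ideal.map (bcIota A B A') ((KaehlerDifferential.ideal A B) ^ (N + 1)) ≤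
      (KaehlerDifferential.ideal A' (B ⊗[A] A')) ^ (N + 1) := by
  rw [Ideal.map_pow]
  exact Ideal.pow_right_mono (bc_map_ideal_le A B A') _

end BCAux3

section BCAux4
set_option linter.unusedSectionVars false
set_option maxHeartbeats 1000000
variable (A B A' : Type*) [CommRing A] [CommRing B] [CommRing A']
  [Algebra A B] [Algebra A A']
  (M : Type*) [AddCommGroup M] [Module A M] [Module B M] [IsScalarTower A B M]

/-- identity cast out of the bimodule synonym. -/
def bcUn (ξ : BiTensor A B A' (B ⊗[A] M) A') : (B ⊗[A] M) ⊗[A] A' := ξ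

@[simp] lemma bcUn_of (ξ : (B ⊗[A] M) ⊗[A] A') :
    bcUn A B A' M (BiTensor.of A B A' (B ⊗[A] M) A' ξ) = ξ := rfl

@[simp] lemma bcUn_zero : bcUn A B A' M 0 = 0 := rfl

@[simp] lemma bcUn_add (ξ η : BiTensor A B A' (B ⊗[A] M) A') :
    bcUn A B A' M (ξ + η) = bcUn A B A' M ξ + bcUn A B A' M η := rfl

@[simp] lemma bc_ofP_add (ξ η : (B ⊗[A] M) ⊗[A] A') :
    BiTensor.of A B A' (B ⊗[A] M) A' (ξ + η) =
      BiTensor.of A B A' (B ⊗[A] M) A' ξ + BiTensor.of A B A' (B ⊗[A] M) A' η := rfl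

@[simp] lemma bc_ofP_zero :
    BiTensor.of A B A' (B ⊗[A] M) A' (0 : (B ⊗[A] M) ⊗[A] A') = 0 := rfl

@[simp] lemma bc_ofM_add (ξ η : M ⊗[A] A') :
    BiTensor.of A B A' M A' (ξ + η) =
      BiTensor.of A B A' M A' ξ + BiTensor.of A B A' M A' η := rfl

@[simp] lemma bc_ofM_zero :
    BiTensor.of A B A' M A' (0 : M ⊗[A] A') = 0 := rfl

@[simp] lemma bcIota_tmul (b c : B) :
    bcIota A B A' (b ⊗ₜ[A] c) = (b ⊗ₜ[A] (1 : A')) ⊗ₜ[A'] (c ⊗ₜ[A] (1 : A')) := rfl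

lemma bc_f_equivariant (r : B ⊗[A] B)
    (w : (B ⊗[A] A') ⊗[A'] BiTensor A B A' M A') :
    bcf0 A B A' M (bcIota A B A' r • w) =
      BiTensor.of A B A' (B ⊗[A] M) A' (r • bcUn A B A' M (bcf0 A B A' M w)) := by
  induction r using TensorProduct.induction_on with
  | zero =>
    simp only [map_zero, zero_smul, bc_ofP_zero]
    exact (congrArg (bcf0 A B A' M) (zero_smul ((B ⊗[A] A') ⊗[A'] (B ⊗[A] A')) w)).trans
      (map_zero _)
  | tmul b c =>
      induction w using TensorProduct.induction_on with
      | zero => simp only [smul_zero, map_zero, bcUn_zero, bc_ofP_zero]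
      | tmul b' t =>
          have key : ∀ traw : M ⊗[A] A',
              bcf0 A B A' M (bcIota A B A' (b ⊗ₜ[A] c) •
                  (b' ⊗ₜ[A'] (BiTensor.of A B A' M A' traw))) =
                BiTensor.of A B A' (B ⊗[A] M) A'
                  ((b ⊗ₜ[A] c) • bcUn A B A' M
                    (bcf0 A B A' M (b' ⊗ₜ[A'] (BiTensor.of A B A' M A' traw)))) := by
            intro traw
            induction traw using TensorProduct.induction_on with
            | zero =>
                simp only [bc_ofM_zero, TensorProduct.tmul_zero, smul_zero, map_zero,
                  bcUn_zero, bc_ofP_zero]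
            | tmul m y =>
                induction b' using TensorProduct.induction_on with
                | zero =>
                    simp only [TensorProduct.zero_tmul, smul_zero, map_zero, bcUn_zero,
                      bc_ofP_zero]
                | tmul u z =>
                    rw [bcIota_tmul, jet_smul_tmul, BiTensor.smul_of, one_smul,
                      Algebra.TensorProduct.tmul_mul_tmul, one_mul, bcf0_tmul, bcF_tmul,
                      bcf0_tmul, bcF_tmul, bcUn_of, TensorProduct.smul_tmul', jet_smul_tmul]
                | add u v hu hv =>
                    simp only [TensorProduct.add_tmul, smul_add, map_add, bcUn_add,
                      bc_ofP_add, hu, hv]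
            | add u v hu hv =>
                simp only [bc_ofM_add, TensorProduct.tmul_add, smul_add, map_add, bcUn_add,
                  bc_ofP_add, hu, hv]
          exact key t
      | add u v hu hv =>
          simp only [smul_add, map_add, bcUn_add, bc_ofP_add, hu, hv]
  | add r s hr hs =>
      simp only [map_add, add_smul, bc_ofP_add, hr, hs]

lemma bc_g_equivariant (r : B ⊗[A] B) (ξ : (B ⊗[A] M) ⊗[A] A') :
    bcG A B A' M (r • ξ) = bcIota A B A' r • bcG A B A' M ξ := by
  induction r using TensorProduct.induction_on with
  | zero =>
    rw [map_zero, zero_smul, map_zero]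
    exact (zero_smul ((B ⊗[A] A') ⊗[A'] (B ⊗[A] A')) (bcG A B A' M ξ)).symm
  | tmul b c =>
      induction ξ using TensorProduct.induction_on with
      | zero =>
          rw [smul_zero, map_zero]
          exact (smul_zero _).symm
      | tmul p z =>
          induction p using TensorProduct.induction_on with
          | zero =>
              rw [TensorProduct.zero_tmul, smul_zero, map_zero]
              exact (smul_zero _).symm
          | tmul u m =>
              rw [TensorProduct.smul_tmul', jet_smul_tmul, bcG_tmul, bcIota_tmul, bcG_tmul,
                jet_smul_tmul, BiTensor.smul_of, one_smul,
                Algebra.TensorProduct.tmul_mul_tmul, one_mul]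
          | add u v hu hv =>
              rw [TensorProduct.add_tmul, smul_add, map_add, map_add, hu, hv, smul_add]
      | add u v hu hv => rw [smul_add, map_add, map_add, hu, hv, smul_add]
  | add r s hr hs => rw [add_smul, map_add, map_add, add_smul, hr, hs]

variable (N : ℕ)

/-- the quotient map `B ⊗ M → J^N(M/A)`, as an `A`-linear map. -/
noncomputable def bcMkQA : (B ⊗[A] M) →ₗ[A] JetMod A B M N where
  toFun := Submodule.Quotient.mk
  map_add' x y := by rw [Submodule.Quotient.mk_add]
  map_smul' a x := by rw [Submodule.Quotient.mk_smul]; rfl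

/-- the inclusion of the defining submodule, as an `A`-linear map. -/
noncomputable def bcSubA :
    ((diagIdeal A B ^ (N + 1)) • (⊤ : Submodule (B ⊗[A] B) (B ⊗[A] M)) :
      Submodule (B ⊗[A] B) (B ⊗[A] M)) →ₗ[A] (B ⊗[A] M) where
  toFun := Subtype.val
  map_add' x y := rfl
  map_smul' a x := rfl

lemma bc_exact : Function.Exact (bcSubA A B M N) (bcMkQA A B M N) := by
  rw [LinearMap.exact_iff]
  ext x
  constructor
  · intro hx
    have : (Submodule.Quotient.mk x : JetMod A B M N) = 0 := hx
    rw [Submodule.Quotient.mk_eq_zero] at this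
    exact ⟨⟨x, this⟩, rfl⟩
  · rintro ⟨⟨y, hy⟩, rfl⟩
    show (Submodule.Quotient.mk y : JetMod A B M N) = 0
    rw [Submodule.Quotient.mk_eq_zero]
    exact hy

/-- raw projection `(B ⊗ M) ⊗ A' → J^N(M/A) ⊗ A'`. -/
noncomputable def bcPiRaw : (B ⊗[A] M) ⊗[A] A' →ₗ[A] (JetMod A B M N) ⊗[A] A' :=
  LinearMap.rTensor A' (bcMkQA A B M N)

@[simp] lemma bcPiRaw_tmul (p : B ⊗[A] M) (z : A') :
    bcPiRaw A B A' M N (p ⊗ₜ[A] z) =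
      (Submodule.Quotient.mk p : JetMod A B M N) ⊗ₜ[A] z := rfl

lemma bc_pi_smul_zero {r : B ⊗[A] B} (hr : r ∈ (diagIdeal A B) ^ (N + 1))
    (ξ : (B ⊗[A] M) ⊗[A] A') :
    bcPiRaw A B A' M N (r • ξ) = 0 := by
  induction ξ using TensorProduct.induction_on with
  | zero => rw [smul_zero, map_zero]
  | tmul p z =>
      rw [TensorProduct.smul_tmul', bcPiRaw_tmul]
      have h0 : (Submodule.Quotient.mk (r • p) : JetMod A B M N) = 0 := by
        rw [Submodule.Quotient.mk_eq_zero]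
        exact Submodule.smul_mem_smul hr trivial
      rw [h0, TensorProduct.zero_tmul]
  | add u v hu hv => rw [smul_add, map_add, hu, hv, add_zero]

lemma bc_pi_surjective : Function.Surjective (bcPiRaw A B A' M N) :=
  LinearMap.rTensor_surjective A' (fun q => by
    obtain ⟨y, rfl⟩ := Submodule.Quotient.mk_surjective _ q
    exact ⟨y, rfl⟩)

lemma bc_pi_ker {ξ : (B ⊗[A] M) ⊗[A] A'} (hξ : bcPiRaw A B A' M N ξ = 0) :
    ∃ u, LinearMap.rTensor A' (bcSubA A B M N) u = ξ := by
  have h := @rTensor_exact A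
    (((diagIdeal A B ^ (N + 1)) • (⊤ : Submodule (B ⊗[A] B) (B ⊗[A] M)) :
      Submodule (B ⊗[A] B) (B ⊗[A] M))) (B ⊗[A] M) (JetMod A B M N) _ _ _ _ _ _ _
    (bcSubA A B M N) (bcMkQA A B M N) A' _ _ (bc_exact A B M N)
    (show Function.Surjective (bcMkQA A B M N) from fun q => by
    obtain ⟨y, rfl⟩ := Submodule.Quotient.mk_surjective _ q
    exact ⟨y, rfl⟩)
  exact (h ξ).mp hξ

/-- projection as an `A'`-linear map between the bimodules. -/
noncomputable def bcPi : BiTensor A B A' (B ⊗[A] M) A' →ₗ[A']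
    BiTensor A B A' (JetMod A B M N) A' where
  toFun ξ := BiTensor.of A B A' (JetMod A B M N) A' (bcPiRaw A B A' M N (bcUn A B A' M ξ))
  map_add' ξ ξ' := by
    rw [bcUn_add, map_add]
    rfl
  map_smul' x ξ := by
    have key : ∀ η : (B ⊗[A] M) ⊗[A] A',
        bcPiRaw A B A' M N (LinearMap.lTensor (B ⊗[A] M) (Algebra.lsmul A A A' x) η) =
          LinearMap.lTensor (JetMod A B M N) (Algebra.lsmul A A A' x)
            (bcPiRaw A B A' M N η) := by
      intro η
      induction η using TensorProduct.induction_on with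
      | zero => rw [map_zero, map_zero, map_zero]
      | tmul p z => rw [LinearMap.lTensor_tmul, bcPiRaw_tmul, bcPiRaw_tmul,
          LinearMap.lTensor_tmul]
      | add u v hu hv => rw [map_add, map_add, hu, hv, map_add, map_add]
    have h1 : bcUn A B A' M (x • ξ) =
        LinearMap.lTensor (B ⊗[A] M) (Algebra.lsmul A A A' x) (bcUn A B A' M ξ) := rfl
    rw [h1, key]
    rfl

@[simp] lemma bcPi_of_tmul (p : B ⊗[A] M) (z : A') :
    bcPi A B A' M N (BiTensor.of A B A' (B ⊗[A] M) A' (p ⊗ₜ[A] z)) =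
      BiTensor.of A B A' (JetMod A B M N) A'
        ((Submodule.Quotient.mk p : JetMod A B M N) ⊗ₜ[A] z) := rfl

end BCAux4

section BCAux5
set_option linter.unusedSectionVars false
set_option maxHeartbeats 1000000
variable (A B A' : Type*) [CommRing A] [CommRing B] [CommRing A']
  [Algebra A B] [Algebra A A']
  (M : Type*) [AddCommGroup M] [Module A M] [Module B M] [IsScalarTower A B M]
  (N : ℕ)

/-- The composite map `T2 → J^N(M/A) ⊗ A'` before quotienting. -/
noncomputable def bcFF : ((B ⊗[A] A') ⊗[A'] BiTensor A B A' M A') →ₗ[A']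
    BiTensor A B A' (JetMod A B M N) A' :=
  (bcPi A B A' M N).comp (bcf0 A B A' M)

lemma bcFF_tmul (b : B) (x : A') (m : M) (y : A') :
    bcFF A B A' M N ((b ⊗ₜ[A] x) ⊗ₜ[A'] (BiTensor.of A B A' M A' (m ⊗ₜ[A] y))) =
      BiTensor.of A B A' (JetMod A B M N) A'
        ((Submodule.Quotient.mk (b ⊗ₜ[A] m) : JetMod A B M N) ⊗ₜ[A] (x * y)) := by
  show bcPi A B A' M N (bcf0 A B A' M ((b ⊗ₜ[A] x) ⊗ₜ[A'] (BiTensor.of A B A' M A' (m ⊗ₜ[A] y)))) = _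
  rw [bcf0_tmul, bcF_tmul, bcPi_of_tmul]

lemma bc_K_le_ker {w : (B ⊗[A] A') ⊗[A'] BiTensor A B A' M A'}
    (hw : w ∈ (diagIdeal A' (B ⊗[A] A') ^ (N + 1)) •
      (⊤ : Submodule ((B ⊗[A] A') ⊗[A'] (B ⊗[A] A'))
        ((B ⊗[A] A') ⊗[A'] BiTensor A B A' M A'))) :
    bcFF A B A' M N w = 0 := by
  refine Submodule.smul_induction_on hw ?_ ?_
  · intro r hr n _hn
    have hr' : r ∈ Ideal.span
        ((bcIota A B A') '' ((diagIdeal A B ^ (N + 1) : Ideal (B ⊗[A] B)) : Set (B ⊗[A] B))) :=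
      bc_pow_ideal_le_map A B A' N hr
    have key : ∀ n, bcFF A B A' M N (r • n) = 0 := by
      refine @Submodule.span_induction ((B ⊗[A] A') ⊗[A'] (B ⊗[A] A')) _ _ _
        Semiring.toModule _
        (fun r _ => ∀ n, bcFF A B A' M N (r • n) = 0) ?_ ?_ ?_ ?_ r hr'
      · rintro _ ⟨r₀, hr₀, rfl⟩ n
        show bcPi A B A' M N (bcf0 A B A' M (bcIota A B A' r₀ • n)) = 0
        rw [bc_f_equivariant]
        show BiTensor.of A B A' (JetMod A B M N) A'
          (bcPiRaw A B A' M N (r₀ • bcUn A B A' M (bcf0 A B A' M n))) = 0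
        rw [bc_pi_smul_zero A B A' M N hr₀]
        rfl
      · intro n
        exact (congrArg (bcFF A B A' M N)
          (zero_smul ((B ⊗[A] A') ⊗[A'] (B ⊗[A] A')) n)).trans (map_zero _)
      · intro x y _ _ hx hy n
        rw [add_smul, map_add, hx, hy, add_zero]
      · intro a x _ hx n
        have h2 : (a * x) • n = x • (a • n) := by
          rw [mul_comm, mul_smul]
        exact (congrArg (bcFF A B A' M N) h2).trans (hx (a • n))
    exact key n
  · intro x y hx hy
    rw [map_add, hx, hy, add_zero]

lemma bc_ker_le_K {w : (B ⊗[A] A') ⊗[A'] BiTensor A B A' M A'}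
    (hw : bcFF A B A' M N w = 0) :
    w ∈ (diagIdeal A' (B ⊗[A] A') ^ (N + 1)) •
      (⊤ : Submodule ((B ⊗[A] A') ⊗[A'] (B ⊗[A] A'))
        ((B ⊗[A] A') ⊗[A'] BiTensor A B A' M A')) := by
  have h0 : bcPiRaw A B A' M N (bcUn A B A' M (bcf0 A B A' M w)) = 0 := hw
  obtain ⟨u, hu⟩ := bc_pi_ker A B A' M N h0
  have hw2 : w = bcG A B A' M (LinearMap.rTensor A' (bcSubA A B M N) u) := by
    rw [hu]
    exact (bc_gf A B A' M w).symm
  rw [hw2]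
  clear hw2 hu h0 hw
  induction u using TensorProduct.induction_on with
  | zero => rw [map_zero, map_zero]; exact Submodule.zero_mem _
  | tmul s z =>
      rw [LinearMap.rTensor_tmul]
      show bcG A B A' M ((s : B ⊗[A] M) ⊗ₜ[A] z) ∈ _
      refine Submodule.smul_induction_on s.2
        (p := fun p => bcG A B A' M (p ⊗ₜ[A] z) ∈ _) ?_ ?_
      · intro r hr p _
        have h1 : (r • p) ⊗ₜ[A] z = r • (p ⊗ₜ[A] z) := (TensorProduct.smul_tmul' r p z).symm
        rw [h1, bc_g_equivariant]
        exact Submodule.smul_mem_smul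
          (bc_map_pow_le A B A' N (Ideal.mem_map_of_mem _ hr)) trivial
      · intro x y hx hy
        rw [TensorProduct.add_tmul, map_add]
        exact Submodule.add_mem _ hx hy
  | add u v hu hv =>
      rw [map_add, map_add]
      exact Submodule.add_mem _ hu hv

lemma bcFF_surjective : Function.Surjective (bcFF A B A' M N) := by
  intro y
  obtain ⟨ξ, hξ⟩ := bc_pi_surjective A B A' M N (y : (JetMod A B M N) ⊗[A] A')
  refine ⟨bcG A B A' M ξ, ?_⟩
  show bcPi A B A' M N (bcf0 A B A' M (bcG A B A' M ξ)) = y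
  rw [bc_fg]
  show BiTensor.of A B A' (JetMod A B M N) A' (bcPiRaw A B A' M N ξ) = y
  rw [hξ]
  rfl

lemma bcFF_Bsmul (s : B ⊗[A] A') (w : (B ⊗[A] A') ⊗[A'] BiTensor A B A' M A') :
    bcFF A B A' M N (s • w) = s • bcFF A B A' M N w := by
  induction s using TensorProduct.induction_on with
  | zero => rw [zero_smul, map_zero, zero_smul]
  | tmul b x =>
      induction w using TensorProduct.induction_on with
      | zero =>
          rw [smul_zero, map_zero]
          exact (smul_zero _).symm
      | tmul b' t =>
          have key : ∀ traw : M ⊗[A] A',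
              bcFF A B A' M N ((b ⊗ₜ[A] x) • (b' ⊗ₜ[A'] (BiTensor.of A B A' M A' traw))) =
                (b ⊗ₜ[A] x) • bcFF A B A' M N (b' ⊗ₜ[A'] (BiTensor.of A B A' M A' traw)) := by
            intro traw
            induction traw using TensorProduct.induction_on with
            | zero =>
                rw [bc_ofM_zero, TensorProduct.tmul_zero, smul_zero, map_zero]
                exact (smul_zero _).symm
            | tmul m y =>
                induction b' using TensorProduct.induction_on with
                | zero =>
                    rw [TensorProduct.zero_tmul, smul_zero, map_zero]
                    exact (smul_zero _).symm
                | tmul u z =>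
                    rw [TensorProduct.smul_tmul', smul_eq_mul,
                      Algebra.TensorProduct.tmul_mul_tmul, bcFF_tmul, bcFF_tmul,
                      BiTensor.smul_of]
                    have h1 : b • (Submodule.Quotient.mk (u ⊗ₜ[A] m) : JetMod A B M N) =
                        Submodule.Quotient.mk ((b * u) ⊗ₜ[A] m) := by
                      rw [← Submodule.Quotient.mk_smul, TensorProduct.smul_tmul', smul_eq_mul]
                    rw [h1, smul_eq_mul]
                    ring_nf
                | add u v hu hv =>
                    rw [TensorProduct.add_tmul, smul_add, map_add, hu, hv, map_add, smul_add]
            | add u v hu hv =>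
                rw [bc_ofM_add, TensorProduct.tmul_add, smul_add, map_add, hu, hv, map_add,
                  smul_add]
          exact key t
      | add u v hu hv =>
          rw [smul_add, map_add, hu, hv, map_add, smul_add]
  | add s s' hs hs' =>
      rw [add_smul, map_add, hs, hs', add_smul]

/-- The induced `A'`-linear map on the jet module. -/
noncomputable def bcE : (JetMod A' (B ⊗[A] A') (BiTensor A B A' M A') N) →ₗ[A']
    BiTensor A B A' (JetMod A B M N) A' :=
  Submodule.liftQ (((diagIdeal A' (B ⊗[A] A') ^ (N + 1)) •
      (⊤ : Submodule ((B ⊗[A] A') ⊗[A'] (B ⊗[A] A'))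
        ((B ⊗[A] A') ⊗[A'] BiTensor A B A' M A'))).restrictScalars A')
    (bcFF A B A' M N) (fun w hw => bc_K_le_ker A B A' M N hw)

lemma bcE_mk (w : (B ⊗[A] A') ⊗[A'] BiTensor A B A' M A') :
    bcE A B A' M N (Submodule.Quotient.mk w) = bcFF A B A' M N w := rfl

lemma bcE_bijective : Function.Bijective (bcE A B A' M N) := by
  constructor
  · intro p q hpq
    obtain ⟨w, rfl⟩ := Submodule.Quotient.mk_surjective _ p
    obtain ⟨v, rfl⟩ := Submodule.Quotient.mk_surjective _ q
    rw [Submodule.Quotient.eq]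
    rw [bcE_mk, bcE_mk] at hpq
    refine bc_ker_le_K A B A' M N ?_
    rw [map_sub, hpq, sub_self]
  · intro y
    obtain ⟨w, hw⟩ := bcFF_surjective A B A' M N y
    exact ⟨Submodule.Quotient.mk w, by rw [bcE_mk, hw]⟩

lemma bcE_Bsmul (s : B ⊗[A] A')
    (q : JetMod A' (B ⊗[A] A') (BiTensor A B A' M A') N) :
    bcE A B A' M N (s • q) = s • bcE A B A' M N q := by
  obtain ⟨w, rfl⟩ := Submodule.Quotient.mk_surjective _ q
  have h1 : s • (Submodule.Quotient.mk w :
      JetMod A' (B ⊗[A] A') (BiTensor A B A' M A') N) = Submodule.Quotient.mk (s • w) :=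
    (Submodule.Quotient.mk_smul _ s w).symm
  rw [h1, bcE_mk, bcE_mk, bcFF_Bsmul]

end BCAux5

/-- (Base change I) For ring homomorphisms `A → B`, `A → A'` and a
`B`-module `M` there is a canonical isomorphism `J^N((M ⊗[A] A')/A') ≅ J^N(M/A) ⊗[A] A'`,
where on the left `M ⊗[A] A'` is regarded as a module over `B ⊗[A] A'` (i.e. as the
bimodule `BiTensor A B A' M A'`), and on the right the tensor product uses the `A`-module
structure of `J^N(M/A)` via `p₁`. -/
theorem jet_base_change_I
    (A B A' : Type*) [CommRing A] [CommRing B] [CommRing A']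
    [Algebra A B] [Algebra A A']
    (M : Type*) [AddCommGroup M] [Module A M] [Module B M] [IsScalarTower A B M]
    (N : ℕ) :
    ∃ e : JetMod A' (B ⊗[A] A') (BiTensor A B A' M A') N ≃ₗ[B ⊗[A] A']
        BiTensor A B A' (JetMod A B M N) A',
      ∀ (b : B) (x : A') (m : M) (y : A'),
        e (Submodule.Quotient.mk
            ((b ⊗ₜ[A] x) ⊗ₜ[A'] (BiTensor.of A B A' M A' (m ⊗ₜ[A] y)))) =
          BiTensor.of A B A' (JetMod A B M N) A'
            ((Submodule.Quotient.mk (b ⊗ₜ[A] m)) ⊗ₜ[A] (x * y)) := by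
  refine ⟨{ toFun := bcE A B A' M N,
            map_add' := fun p q => map_add _ p q,
            map_smul' := fun s q => bcE_Bsmul A B A' M N s q,
            invFun :=
              (LinearEquiv.ofBijective (bcE A B A' M N) (bcE_bijective A B A' M N)).symm,
            left_inv := fun q =>
              (LinearEquiv.ofBijective (bcE A B A' M N)
                (bcE_bijective A B A' M N)).symm_apply_apply q,
            right_inv := fun y =>
              (LinearEquiv.ofBijective (bcE A B A' M N)
                (bcE_bijective A B A' M N)).apply_symm_apply y },
          fun b x m y => ?_⟩
  show bcE A B A' M N (Submodule.Quotient.mk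
      ((b ⊗ₜ[A] x) ⊗ₜ[A'] (BiTensor.of A B A' M A' (m ⊗ₜ[A] y)))) = _
  rw [bcE_mk, bcFF_tmul]

end JetPaper
end

section
/- Let k → A be a homomorphism of commutative rings, N a natural number, and D : G → F a differential operator of order ≤ N relative to k between A-modules. Let π_G : G ↠ G₂ and π_F : F ↠ F₂ be surjective A-linear maps, and suppose there is a k-linear map D₂ : G₂ → F₂ with D₂ ∘ π_G = π_F ∘ D. Then D₂ is a differential operator of order ≤ N relative to k. -/
/-!
Basic infrastructure for jet algebras and jet modules, following the paper
"Basics of jet modules and algebraic linear differential operators".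

For a ring homomorphism `k → A`, the diagonal ideal `I_{A/k} ⊆ A ⊗[k] A` is the kernel of
the multiplication map; the `N`-th jet algebra is `J^N(A/k) = (A ⊗[k] A) ⧸ I_{A/k}^{N+1}`,
with its two `A`-algebra structure maps `p₁ : a ↦ a ⊗ 1` and `p₂ : a ↦ 1 ⊗ a`.
For an `A`-module `M`, `A ⊗[k] M` is a module over `A ⊗[k] A` via
`(a ⊗ b) • (x ⊗ m) = (a * x) ⊗ (b • m)`, and the `N`-th jet module is
`J^N(M/k) = (A ⊗[k] M) ⧸ I_{A/k}^{N+1} · (A ⊗[k] M)`, a module over `J^N(A/k)`,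
equipped with the universal filtered derivation `d^N : M → J^N(M/k)`, `m ↦ [1 ⊗ m]`.
-/

open scoped TensorProduct

namespace JetPaper

set_option maxHeartbeats 1600000 in
/-- Let `D : G → F` be a differential operator of order `≤ N` relative to
`k`, let `π_G : G ↠ G₂` and `π_F : F ↠ F₂` be surjective `A`-linear maps, and suppose the
`k`-linear map `D₂ : G₂ → F₂` satisfies `D₂ ∘ π_G = π_F ∘ D`. Then `D₂` is a differential
operator of order `≤ N` relative to `k`. -/
theorem diffop_quotient
    (k A : Type*) [CommRing k] [CommRing A] [Algebra k A]
    (G F G₂ F₂ : Type*)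
    [AddCommGroup G] [Module k G] [Module A G] [IsScalarTower k A G]
    [AddCommGroup F] [Module k F] [Module A F] [IsScalarTower k A F]
    [AddCommGroup G₂] [Module k G₂] [Module A G₂] [IsScalarTower k A G₂]
    [AddCommGroup F₂] [Module k F₂] [Module A F₂] [IsScalarTower k A F₂]
    (N : ℕ) (D : G →ₗ[k] F)
    (Dt : JetMod k A G N →ₗ[A] F) (hD : ∀ g : G, Dt (jetD k A G N g) = D g)
    (πG : G →ₗ[A] G₂) (πF : F →ₗ[A] F₂)
    (hπG : Function.Surjective πG) (hπF : Function.Surjective πF)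
    (D₂ : G₂ →ₗ[k] F₂) (hcomm : ∀ g : G, D₂ (πG g) = πF (D g)) :
    ∃ Dt₂ : JetMod k A G₂ N →ₗ[A] F₂, ∀ g₂ : G₂, Dt₂ (jetD k A G₂ N g₂) = D₂ g₂ := by
  classical
  set I : Ideal (A ⊗[k] A) := diagIdeal k A ^ (N + 1) with hI
  set S₁ : Submodule (A ⊗[k] A) (A ⊗[k] G) := I • ⊤ with hS₁
  set S₂ : Submodule (A ⊗[k] A) (A ⊗[k] G₂) := I • ⊤ with hS₂
  set ι : LinearMap.ker πG →ₗ[k] G := ((LinearMap.ker πG).subtype).restrictScalars k with hι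
  set πG' : G →ₗ[k] G₂ := πG.restrictScalars k with hπG'
  have hπG's : Function.Surjective πG' := hπG
  set φ : A ⊗[k] G →ₗ[k] A ⊗[k] G₂ := LinearMap.lTensor A πG' with hφdef
  have hsmul : ∀ (t : A ⊗[k] A) (y : A ⊗[k] G), φ (t • y) = t • φ y := by
    intro t y
    induction t using TensorProduct.induction_on with
    | zero => rw [zero_smul, zero_smul, map_zero]
    | add t₁ t₂ h₁ h₂ => rw [add_smul, map_add, h₁, h₂, add_smul]
    | tmul a b =>
      induction y using TensorProduct.induction_on with
      | zero => rw [smul_zero, map_zero, smul_zero]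
      | add y₁ y₂ h₁ h₂ => rw [smul_add, map_add, h₁, h₂, map_add, smul_add]
      | tmul x g =>
        rw [jet_smul_tmul]
        simp only [hφdef, LinearMap.lTensor_tmul, hπG', LinearMap.restrictScalars_apply,
          map_smul, jet_smul_tmul]
  let Φ : A ⊗[k] G →ₗ[A ⊗[k] A] A ⊗[k] G₂ :=
    { toFun := φ, map_add' := fun x y => map_add φ x y, map_smul' := hsmul }
  have hΦapp : ∀ y, Φ y = φ y := fun _ => rfl
  have hΦsurj : Function.Surjective Φ := LinearMap.lTensor_surjective A hπG's
  have hmap : Submodule.map Φ S₁ = S₂ := by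
    rw [hS₁, hS₂, Submodule.map_smul'', Submodule.map_top, LinearMap.range_eq_top.mpr hΦsurj]
  have hex : Function.Exact ι πG' := by
    intro y
    constructor
    · intro hy; exact ⟨⟨y, hy⟩, rfl⟩
    · rintro ⟨⟨x, hx⟩, rfl⟩; exact hx
  have hexT : Function.Exact (LinearMap.lTensor A ι) (LinearMap.lTensor A πG') :=
    lTensor_exact A hex hπG's
  have hker0 : ∀ v : A ⊗[k] (LinearMap.ker πG),
      πF (Dt (Submodule.Quotient.mk (LinearMap.lTensor A ι v))) = 0 := by
    intro v
    induction v using TensorProduct.induction_on with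
    | zero => simp
    | add u w hu hw =>
        rw [map_add, Submodule.Quotient.mk_add, map_add, map_add, hu, hw, add_zero]
    | tmul a g =>
        have h1 : (LinearMap.lTensor A ι) (a ⊗ₜ[k] g) = a ⊗ₜ[k] (g : G) := rfl
        have h2 : (a ⊗ₜ[k] (g : G) : A ⊗[k] G) = a • ((1 : A) ⊗ₜ[k] (g : G)) := by
          rw [TensorProduct.smul_tmul', smul_eq_mul, mul_one]
        rw [h1, h2, Submodule.Quotient.mk_smul]
        have h3 : (Submodule.Quotient.mk ((1 : A) ⊗ₜ[k] (g : G)) : JetMod k A G N) =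
            jetD k A G N (g : G) := rfl
        rw [h3, map_smul, hD, map_smul, ← hcomm]
        have h4 : πG (g : G) = 0 := g.2
        rw [h4, map_zero, smul_zero]
  have hmain : ∀ z : A ⊗[k] G, Φ z ∈ S₂ →
      πF (Dt (Submodule.Quotient.mk z)) = 0 := by
    intro z hz
    rw [← hmap] at hz
    obtain ⟨w, hw, hwz⟩ := hz
    have hker : LinearMap.lTensor A πG' (z - w) = 0 := by
      have h9 : φ z = φ w := by rw [← hΦapp, ← hΦapp, hwz]
      rw [← hφdef, map_sub, h9, sub_self]
    obtain ⟨v, hv⟩ := (hexT (z - w)).mp hker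
    have hz' : z = w + (LinearMap.lTensor A ι) v := by
      rw [hv]; abel
    rw [hz', Submodule.Quotient.mk_add, map_add, map_add,
      (Submodule.Quotient.mk_eq_zero _).mpr hw, map_zero, map_zero, zero_add]
    exact hker0 v
  have hle : S₁ ≤ S₂.comap Φ := by
    rw [← hmap]; exact Submodule.le_comap_map Φ S₁
  let jπbig : JetMod k A G N →ₗ[A ⊗[k] A] JetMod k A G₂ N := Submodule.mapQ S₁ S₂ Φ hle
  haveI t1 : IsScalarTower A (A ⊗[k] A) (JetMod k A G N) := by
    constructor
    intro a t x
    obtain ⟨y, rfl⟩ := Submodule.Quotient.mk_surjective _ x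
    rw [← Submodule.Quotient.mk_smul, ← Submodule.Quotient.mk_smul,
      ← Submodule.Quotient.mk_smul, smul_assoc]
  haveI t2 : IsScalarTower A (A ⊗[k] A) (JetMod k A G₂ N) := by
    constructor
    intro a t x
    obtain ⟨y, rfl⟩ := Submodule.Quotient.mk_surjective _ x
    rw [← Submodule.Quotient.mk_smul, ← Submodule.Quotient.mk_smul,
      ← Submodule.Quotient.mk_smul, smul_assoc]
  let jπ : JetMod k A G N →ₗ[A] JetMod k A G₂ N := jπbig.restrictScalars A
  have hjπ : ∀ z : A ⊗[k] G,
      jπ (Submodule.Quotient.mk z) = Submodule.Quotient.mk (Φ z) := by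
    intro z
    show jπbig (Submodule.Quotient.mk z) = _
    exact Submodule.mapQ_apply (p := S₁) (q := S₂) Φ z
  have hjs : Function.Surjective jπ := by
    intro y
    obtain ⟨y', rfl⟩ := Submodule.Quotient.mk_surjective _ y
    obtain ⟨x, hx⟩ := hΦsurj y'
    exact ⟨Submodule.Quotient.mk x, by rw [hjπ, hx]⟩
  have hkerle : LinearMap.ker jπ ≤ LinearMap.ker (πF ∘ₗ Dt) := by
    intro x hx
    obtain ⟨z, rfl⟩ := Submodule.Quotient.mk_surjective _ x
    have h0 : Submodule.Quotient.mk (Φ z) = (0 : JetMod k A G₂ N) := by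
      rw [← hjπ]; exact hx
    exact hmain z ((Submodule.Quotient.mk_eq_zero _).mp h0)
  set T : JetMod k A G N →ₗ[A] F₂ := πF ∘ₗ Dt with hT
  have hzero : ∀ x y : JetMod k A G N, jπ x = jπ y → T x = T y := by
    intro x y hxy
    have h0 : jπ (x - y) = 0 := by rw [map_sub, hxy, sub_self]
    have h1 : T (x - y) = 0 := LinearMap.mem_ker.mp (hkerle (LinearMap.mem_ker.mpr h0))
    rw [map_sub] at h1
    exact sub_eq_zero.mp h1
  let sf := Function.surjInv hjs
  have hs : ∀ y, jπ (sf y) = y := Function.surjInv_eq hjs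
  refine ⟨{ toFun := fun y => T (sf y)
            map_add' := fun y₁ y₂ => by
              have h := hzero (sf (y₁ + y₂)) (sf y₁ + sf y₂) (by rw [map_add, hs, hs, hs])
              show T (sf (y₁ + y₂)) = T (sf y₁) + T (sf y₂)
              rw [h, map_add]
            map_smul' := fun a y => by
              have h := hzero (sf (a • y)) (a • sf y) (by rw [map_smul, hs, hs])
              show T (sf (a • y)) = a • T (sf y)
              rw [h, map_smul] }, ?_⟩
  intro g₂
  obtain ⟨g, rfl⟩ := hπG g₂
  have hφ1 : Φ ((1 : A) ⊗ₜ[k] g) = (1 : A) ⊗ₜ[k] (πG g) := by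
    rw [hΦapp, hφdef]
    simp [hπG']
  have h5 : jπ (jetD k A G N g) = jetD k A G₂ N (πG g) := by
    have h5a : jetD k A G N g = Submodule.Quotient.mk ((1 : A) ⊗ₜ[k] g) := rfl
    rw [h5a, hjπ, hφ1]
    rfl
  show T (sf (jetD k A G₂ N (πG g))) = D₂ (πG g)
  have h8 := hzero (sf (jetD k A G₂ N (πG g))) (jetD k A G N g) (by rw [hs, h5])
  rw [h8, hT, LinearMap.comp_apply, hD, ← hcomm]


end JetPaper
end
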